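/- Let s be a positive integer and define Π(x) = ∏_{i=1}^{2s} sin((x - y_i)/2) where y_i = π + π/(2s) - i·π/s for i = 1,…,2s. Then the maximum of |Π(x)| over x ∈ ℝ equals 1/2^{2s-1}. -/

import Mathlib

open Real

lemma prod_one_sub_zeta (n : ℕ) (hn : 0 < n) (z : ℂ) :
    ∏ k ∈ Finset.range n, (1 - Complex.exp (2 * Real.pi * Complex.I / n) ^ k * z)
      = 1 - z ^ n := by
  haveI : NeZero n := ⟨hn.ne'⟩
  set ζ : ℂ := Complex.exp (2 * Real.pi * Complex.I / n) with hζdef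
  have h : IsPrimitiveRoot ζ n := Complex.isPrimitiveRoot_exp n hn.ne'
  have key := IsPrimitiveRoot.pow_sub_pow_eq_prod_sub_mul 1 z hn h
  rw [one_pow] at key
  rw [key]
  have himg : Polynomial.nthRootsFinset n (1 : ℂ)
      = Finset.image (fun k => ζ ^ k) (Finset.range n) := by
    ext μ
    simp only [Polynomial.mem_nthRootsFinset hn (1 : ℂ), Finset.mem_image, Finset.mem_range]
    constructor
    · intro hμ
      obtain ⟨i, hi, hieq⟩ := h.eq_pow_of_pow_eq_one hμ
      exact ⟨i, hi, hieq⟩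
    · rintro ⟨i, _, rfl⟩
      rw [← pow_mul, mul_comm, pow_mul, h.pow_eq_one, one_pow]
  rw [himg, Finset.prod_image (fun a ha b hb hab => h.injOn_pow
    (by simpa using ha) (by simpa using hb) hab)]

lemma complex_prod_sin (n : ℕ) (hn : 0 < n) (θ : ℂ) :
    ∏ k ∈ Finset.range n, Complex.sin (θ + k * ((Real.pi : ℂ) / n))
      = Complex.sin (n * θ) / 2 ^ (n - 1) := by
  obtain ⟨m, rfl⟩ : ∃ m, n = m + 1 := ⟨n - 1, (Nat.succ_pred_eq_of_pos hn).symm⟩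
  have hn' : ((m + 1 : ℕ) : ℂ) ≠ 0 := by exact_mod_cast hn.ne'
  set c : ℂ := (Real.pi : ℂ) / ((m + 1 : ℕ) : ℂ) with hc
  set ζ : ℂ := Complex.exp (2 * Real.pi * Complex.I / ((m + 1 : ℕ) : ℂ)) with hζ
  set z : ℂ := Complex.exp (2 * θ * Complex.I) with hz
  have hsin : ∀ t : ℂ, Complex.sin t
      = Complex.exp (-t * Complex.I) * (1 - Complex.exp (2 * t * Complex.I)) * (Complex.I / 2) := by
    intro t
    have h2 : Complex.exp (-t * Complex.I) * Complex.exp (2 * t * Complex.I)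
        = Complex.exp (t * Complex.I) := by
      rw [← Complex.exp_add]; ring_nf
    rw [Complex.sin, mul_one_sub, h2]
    ring
  have hfact : ∀ k ∈ Finset.range (m + 1), Complex.sin (θ + k * c)
      = Complex.exp (-(θ + k * c) * Complex.I) * (1 - ζ ^ k * z) * (Complex.I / 2) := by
    intro k _
    rw [hsin]
    congr 2
    have : (2 * (θ + k * c) * Complex.I)
        = 2 * θ * Complex.I + k * (2 * Real.pi * Complex.I / ((m + 1 : ℕ) : ℂ)) := by
      rw [hc]; field_simp
    rw [this, Complex.exp_add, hζ, ← Complex.exp_nat_mul]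
    ring
  have hS : ((∑ i ∈ Finset.range (m + 1), i : ℕ) : ℂ) * 2 = ((m + 1 : ℕ) : ℂ) * m := by
    have h2 : (∑ i ∈ Finset.range (m + 1), i) * 2 = (m + 1) * m := by
      simpa using Finset.sum_range_id_mul_two (m + 1)
    exact_mod_cast h2
  have hSval : (∑ k ∈ Finset.range (m + 1), (k : ℂ)) = ((m : ℂ) + 1) * m / 2 := by
    have h2 : ((∑ i ∈ Finset.range (m + 1), i : ℕ) : ℂ) * 2 = ((m : ℂ) + 1) * m := by
      exact_mod_cast hS
    push_cast at h2 ⊢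
    linear_combination h2 / 2
  have hsum : ∑ k ∈ Finset.range (m + 1), (-(θ + k * c) * Complex.I)
      = -(((m + 1 : ℕ) : ℂ) * θ) * Complex.I
        + (m : ℂ) * (-((Real.pi : ℂ) / 2) * Complex.I) := by
    rw [Finset.sum_congr rfl (fun k _ => by ring :
        ∀ k ∈ Finset.range (m + 1), (-(θ + k * c) * Complex.I) = (θ + k * c) * (-Complex.I)),
      ← Finset.sum_mul, Finset.sum_add_distrib, Finset.sum_const, Finset.card_range,
      ← Finset.sum_mul, hSval, hc, nsmul_eq_mul]
    have hm1 : ((m : ℂ) + 1) ≠ 0 := Nat.cast_add_one_ne_zero m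
    have hkey : ((m : ℂ) + 1) * m / 2 * ((Real.pi : ℂ) / ((m : ℂ) + 1))
        = (m : ℂ) * Real.pi / 2 := by
      field_simp
    push_cast
    linear_combination (-Complex.I) * hkey
  have hpow : (-Complex.I) ^ m * (Complex.I / 2 : ℂ) ^ (m + 1) = Complex.I / 2 / 2 ^ m := by
    rw [pow_succ, ← mul_assoc, ← mul_pow,
      show (-Complex.I) * (Complex.I / 2) = -(Complex.I * Complex.I) / 2 by ring,
      Complex.I_mul_I]
    norm_num
    rw [div_pow, one_pow]
    ring
  have hmi : Complex.exp ((m : ℂ) * (-((Real.pi : ℂ) / 2) * Complex.I)) = (-Complex.I) ^ m := by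
    rw [Complex.exp_nat_mul]
    congr 1
    rw [show (-((Real.pi : ℂ) / 2) * Complex.I) = ((-(Real.pi / 2) : ℝ) : ℂ) * Complex.I by
      push_cast; ring, Complex.exp_mul_I]
    simp [← Complex.ofReal_cos, ← Complex.ofReal_sin, Real.cos_pi_div_two, Real.sin_pi_div_two]
  have hzn : z ^ (m + 1) = Complex.exp (2 * (((m + 1 : ℕ) : ℂ) * θ) * Complex.I) := by
    rw [hz, ← Complex.exp_nat_mul]
    congr 1
    ring
  rw [Finset.prod_congr rfl hfact, Finset.prod_mul_distrib, Finset.prod_mul_distrib,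
    Finset.prod_const, Finset.card_range, prod_one_sub_zeta (m + 1) hn z, ← Complex.exp_sum,
    hsum, Complex.exp_add, hmi, hzn, hsin (((m + 1 : ℕ) : ℂ) * θ),
    show m + 1 - 1 = m from rfl]
  set A : ℂ := Complex.exp (-(((m + 1 : ℕ) : ℂ) * θ) * Complex.I)
  set B : ℂ := Complex.exp (2 * (((m + 1 : ℕ) : ℂ) * θ) * Complex.I)
  linear_combination A * (1 - B) * hpow

lemma real_prod_sin (n : ℕ) (hn : 0 < n) (θ : ℝ) :
    ∏ k ∈ Finset.range n, Real.sin (θ + k * (π / n))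
      = Real.sin (n * θ) / 2 ^ (n - 1) := by
  have h := complex_prod_sin n hn (θ : ℂ)
  exact_mod_cast h

theorem max_abs_Pi (s : ℕ) (hs : 0 < s)
    (Pi' : ℝ → ℝ)
    (hPi : ∀ x : ℝ, Pi' x =
      ∏ i ∈ Finset.Icc 1 (2 * s), Real.sin ((x - (π + π / (2 * s) - i * π / s)) / 2)) :
    IsGreatest (Set.range fun x : ℝ => |Pi' x|) (1 / 2 ^ (2 * s - 1)) := by
  have hs' : (s : ℝ) ≠ 0 := Nat.cast_ne_zero.2 hs.ne'
  have hn : 0 < 2 * s := by omega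
  have hval : ∀ x : ℝ, Pi' x
      = Real.sin (((2 * s : ℕ) : ℝ) * (x / 2 - π / 2 + π / (4 * s))) / 2 ^ (2 * s - 1) := by
    intro x
    rw [hPi x, ← real_prod_sin (2 * s) hn (x / 2 - π / 2 + π / (4 * s))]
    rw [show Finset.Icc 1 (2 * s) = Finset.Ico 1 (2 * s + 1) by
      rw [Finset.Ico_add_one_right_eq_Icc], Finset.prod_Ico_eq_prod_range]
    rw [show 2 * s + 1 - 1 = 2 * s by omega]
    refine Finset.prod_congr rfl fun k _ => ?_
    congr 1
    push_cast
    field_simp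
    ring
  constructor
  · refine ⟨π, ?_⟩
    simp only
    rw [hval π]
    have harg : ((2 * s : ℕ) : ℝ) * (π / 2 - π / 2 + π / (4 * s)) = π / 2 := by
      push_cast
      field_simp
      ring
    rw [harg, Real.sin_pi_div_two, abs_of_nonneg (by positivity)]
  · rintro y ⟨x, rfl⟩
    simp only
    rw [hval x, abs_div, abs_of_nonneg (by positivity : (0:ℝ) ≤ 2 ^ (2 * s - 1))]
    gcongr
    exact Real.abs_sin_le_one _
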